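/- Fix n ≥ 1 and a ∈ ℂ*. Consider F : (ℂ*)ⁿ × ℂ → ℂ, F(z₁,…,z_n, w) = z₁ + ⋯ + z_n + w·(a - z₁⋯z_n). A point (z, w) with all z_i ≠ 0 is a critical point of F (all n+1 partial derivatives vanish) if and only if there exists ζ ∈ ℂ* with ζⁿ = a, z₁ = ⋯ = z_n = ζ, and w = ζ^{1-n}. -/

import Mathlib

open Finset

/-- Critical points of the Landau–Ginzburg superpotential
`F(z,w) = z₁ + ⋯ + zₙ + w(a - z₁⋯zₙ)` with all `zᵢ ≠ 0` are exactly the points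
`z₁ = ⋯ = zₙ = ζ`, `w = ζ^{1-n}` for `ζ` an `n`-th root of `a`. -/
theorem mirror_superpotential_critical_points (n : ℕ) (hn : 1 ≤ n) (a : ℂ) (ha : a ≠ 0)
    (z : Fin n → ℂ) (hz : ∀ i, z i ≠ 0) (w : ℂ) :
    let F : ((Fin n → ℂ) × ℂ) → ℂ :=
      fun p => (∑ i, p.1 i) + p.2 * (a - ∏ i, p.1 i)
    fderiv ℂ F (z, w) = 0 ↔
      ∃ ζ : ℂ, ζ ≠ 0 ∧ ζ ^ n = a ∧ (∀ i, z i = ζ) ∧ w = ζ ^ ((1 : ℤ) - n) := by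
  intro F
  classical
  set A : Fin n → ((Fin n → ℂ) × ℂ) →L[ℂ] ℂ := fun i =>
    (ContinuousLinearMap.proj i).comp (ContinuousLinearMap.fst ℂ (Fin n → ℂ) ℂ) with hA
  set B : ((Fin n → ℂ) × ℂ) →L[ℂ] ℂ := ContinuousLinearMap.snd ℂ (Fin n → ℂ) ℂ with hB
  set p : Fin n → ℂ := fun i => ∏ j ∈ univ.erase i, z j with hp
  set P : ℂ := ∏ i, z i with hP
  set D : ((Fin n → ℂ) × ℂ) →L[ℂ] ℂ := ∑ i, p i • A i with hD
  have hprod : HasFDerivAt (fun q : (Fin n → ℂ) × ℂ => ∏ i, q.1 i) D (z, w) := by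
    have h := HasFDerivAt.finset_prod (u := (univ : Finset (Fin n)))
      (g := fun i (q : (Fin n → ℂ) × ℂ) => q.1 i) (g' := A) (x := (z, w))
      (fun i _ => (A i).hasFDerivAt)
    exact h
  have he : HasFDerivAt (fun q : (Fin n → ℂ) × ℂ => a - ∏ i, q.1 i) (-D) (z, w) :=
    by have h := (hasFDerivAt_const a (z, w)).sub hprod; rw [zero_sub] at h; exact h
  have hh : HasFDerivAt (fun q : (Fin n → ℂ) × ℂ => q.2 * (a - ∏ i, q.1 i))
      (w • (-D) + (a - P) • B) (z, w) := B.hasFDerivAt.mul he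
  have hg : HasFDerivAt (fun q : (Fin n → ℂ) × ℂ => ∑ i, q.1 i) (∑ i, A i) (z, w) := by
    have h := (∑ i, A i).hasFDerivAt (x := (z, w))
    convert h using 1
    ext q
    simp [hA]
  have hF : HasFDerivAt F ((∑ i, A i) + (w • (-D) + (a - P) • B)) (z, w) := hg.add hh
  rw [hF.fderiv]
  constructor
  · intro h0
    -- evaluate at (0,1) : a = P
    have hPa : P = a := by
      have := congrArg (fun L => L ((0 : Fin n → ℂ), (1 : ℂ))) h0
      simp [hA, hB, hD] at this
      linear_combination -this
    have hci : ∀ i, 1 - w * p i = 0 := by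
      intro i
      have := congrArg (fun L => L (Pi.single i (1:ℂ), (0 : ℂ))) h0
      simp [hA, hB, hD, Pi.single_apply] at this
      linear_combination this
    have hwpi : ∀ i, w * p i = 1 := fun i => by linear_combination -(hci i)
    have i0 : Fin n := ⟨0, hn⟩
    have hw0 : w ≠ 0 := fun h => by simpa [h] using hwpi i0
    have hzi : ∀ i, z i = w * a := by
      intro i
      have hpe : p i * z i = P := Finset.prod_erase_mul univ z (mem_univ i)
      have h1 : w * (p i * z i) = w * a := by rw [hpe, hPa]
      calc z i = (w * p i) * z i := by rw [hwpi i]; ring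
        _ = w * a := by rw [mul_assoc, h1]
    refine ⟨w * a, mul_ne_zero hw0 ha, ?_, hzi, ?_⟩
    · have : P = (w * a) ^ n := by
        rw [hP, Finset.prod_congr rfl (fun i _ => hzi i), Finset.prod_const]
        simp
      rw [← this, hPa]
    · have hwa : (w * a) ^ n = a := by
        have : P = (w * a) ^ n := by
          rw [hP, Finset.prod_congr rfl (fun i _ => hzi i), Finset.prod_const]
          simp
        rw [← this, hPa]
      rw [zpow_sub₀ (mul_ne_zero hw0 ha), zpow_one, zpow_natCast, hwa]
      field_simp
  · rintro ⟨ζ, hζ0, hζn, hzi, hw⟩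
    have hPa : P = a := by
      rw [hP, Finset.prod_congr rfl (fun i _ => hzi i), Finset.prod_const]
      simpa using hζn
    have hpi : ∀ i : Fin n, p i = ζ ^ (n - 1) := by
      intro i
      rw [hp]
      simp [Finset.prod_congr rfl (fun j (hj : j ∈ univ.erase i) => hzi j),
        Finset.prod_const, Finset.card_erase_of_mem (mem_univ i)]
    have hwz : w * ζ ^ (n - 1) = 1 := by
      rw [hw, ← zpow_natCast ζ (n-1)]
      rw [← zpow_add₀ hζ0]
      have : (1 : ℤ) - n + (n - 1 : ℕ) = 0 := by
        push_cast [Nat.cast_sub hn]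
        ring
      rw [this, zpow_zero]
    refine ContinuousLinearMap.ext fun v => ?_
    simp only [ContinuousLinearMap.add_apply, ContinuousLinearMap.coe_sum', Finset.sum_apply,
      ContinuousLinearMap.smul_apply, ContinuousLinearMap.neg_apply, hA, hB, hD,
      ContinuousLinearMap.coe_comp', Function.comp_apply, ContinuousLinearMap.coe_fst',
      ContinuousLinearMap.proj_apply, ContinuousLinearMap.coe_snd',
      ContinuousLinearMap.zero_apply, smul_eq_mul]
    have hs : ∑ i, p i * v.1 i = ζ ^ (n - 1) * ∑ i, v.1 i := by
      rw [Finset.mul_sum]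
      exact Finset.sum_congr rfl fun i _ => by rw [hpi i]
    rw [hs, hPa]
    linear_combination (-(∑ i : Fin n, v.1 i)) * hwz
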